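/- With sin_q(z) = sum_{n≥0} (-1)^n q^n z^(2n+1)/[2n+1]_q! and cos_q(z) = sum_{n≥0} (-1)^n q^n z^(2n)/[2n]_q! as formal power series over Q(q), one has sin_q(z)·sin_{1/q}(z) + cos_q(z)·cos_{1/q}(z) = 1. -/

import Mathlib

set_option maxHeartbeats 1000000

noncomputable section
open Finset PowerSeries

abbrev Fq : Type := RatFunc ℚ

/-- The variable `q` as element of the field of rational functions `ℚ(q)`. -/
def qv : Fq := RatFunc.X

/-- The q-integer `[m]_q = 1 + q + ... + q^(m-1)`. -/
def qInt (x : Fq) (m : ℕ) : Fq := ∑ i ∈ Finset.range m, x ^ i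

/-- The q-factorial `[m]_q! = [1]_q [2]_q ⋯ [m]_q`. -/
def qFact (x : Fq) (m : ℕ) : Fq := ∏ i ∈ Finset.range m, qInt x (i + 1)

/-- `sin_q(z) = ∑ (-1)^n q^n z^(2n+1)/[2n+1]_q!`. -/
def qsin (x : Fq) : PowerSeries Fq :=
  PowerSeries.mk fun m =>
    if m % 2 = 1 then (-1 : Fq) ^ (m / 2) * x ^ (m / 2) / qFact x m else 0

/-- `cos_q(z) = ∑ (-1)^n q^n z^(2n)/[2n]_q!`. -/
def qcos (x : Fq) : PowerSeries Fq :=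
  PowerSeries.mk fun m =>
    if m % 2 = 0 then (-1 : Fq) ^ (m / 2) * x ^ (m / 2) / qFact x m else 0

lemma qv_ne_zero : qv ≠ 0 := RatFunc.X_ne_zero

lemma qInt_ne_zero {m : ℕ} (hm : 1 ≤ m) : qInt qv m ≠ 0 := by
  have h : qInt qv m * (qv - 1) = qv ^ m - 1 := geom_sum_mul qv m
  intro h0
  rw [h0, zero_mul] at h
  have hpow : (qv : Fq) ^ m = 1 := by linear_combination -h
  have hinj := IsFractionRing.injective (Polynomial ℚ) Fq
  have hpoly : (Polynomial.X : Polynomial ℚ) ^ m = 1 := by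
    apply hinj
    simpa [qv, RatFunc.algebraMap_X, map_pow, map_one] using hpow
  have heval := congrArg (Polynomial.eval 0) hpoly
  rw [Polynomial.eval_pow, Polynomial.eval_X, Polynomial.eval_one,
    zero_pow (by omega : m ≠ 0)] at heval
  exact zero_ne_one heval

lemma qInt_inv_mul (m : ℕ) : qv ^ (m - 1) * qInt qv⁻¹ m = qInt qv m := by
  rw [qInt, qInt, Finset.mul_sum]
  rw [← Finset.sum_range_reflect (fun i => qv ^ i) m]
  apply Finset.sum_congr rfl
  intro i hi
  rw [Finset.mem_range] at hi
  rw [inv_pow, ← pow_sub₀ qv qv_ne_zero (by omega : i ≤ m - 1)]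

lemma qFact_ne_zero (m : ℕ) : qFact qv m ≠ 0 := by
  rw [qFact, Finset.prod_ne_zero_iff]
  intro i _
  exact qInt_ne_zero (by omega)

lemma qFact_zero : qFact qv 0 = 1 := by simp [qFact]

lemma qFact_succ (n : ℕ) : qFact qv (n + 1) = qFact qv n * qInt qv (n + 1) := by
  rw [qFact, Finset.prod_range_succ]; rfl

lemma qFact_inv_mul (m : ℕ) : qv ^ (m.choose 2) * qFact qv⁻¹ m = qFact qv m := by
  have h : m.choose 2 = ∑ i ∈ Finset.range m, i := by
    rw [Finset.sum_range_id, Nat.choose_two_right]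
  rw [h, ← Finset.prod_pow_eq_pow_sum, qFact, qFact, ← Finset.prod_mul_distrib]
  apply Finset.prod_congr rfl
  intro i _
  have := qInt_inv_mul (i + 1)
  simpa using this

lemma qFact_inv_eq (n : ℕ) : qFact qv⁻¹ n = qFact qv n / qv ^ (n.choose 2) := by
  rw [eq_div_iff (pow_ne_zero _ qv_ne_zero), mul_comm]
  exact qFact_inv_mul n

lemma qInt_add (a b : ℕ) : qInt qv (a + b) = qInt qv a + qv ^ a * qInt qv b := by
  rw [qInt, qInt, qInt, Finset.sum_range_add, Finset.mul_sum]
  congr 1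
  exact Finset.sum_congr rfl fun i _ => (pow_add qv a i)

/-- The Gaussian binomial coefficient (as element of `ℚ(q)`). -/
def qB (m j : ℕ) : Fq :=
  if j ≤ m then qFact qv m / (qFact qv j * qFact qv (m - j)) else 0

lemma qB_zero (m : ℕ) : qB m 0 = 1 := by
  simp [qB, qFact_zero, div_self (qFact_ne_zero m)]

lemma qB_self (m : ℕ) : qB m m = 1 := by
  simp [qB, Nat.sub_self, qFact_zero, div_self (qFact_ne_zero m)]

lemma qB_gt {m j : ℕ} (h : m < j) : qB m j = 0 := by
  simp [qB, Nat.not_le.mpr h]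

lemma qB_pascal (m j : ℕ) :
    qB (m + 1) (j + 1) = qB m (j + 1) + qv ^ (m - j) * qB m j := by
  rcases Nat.lt_or_ge m j with h | h
  · rw [qB_gt (Nat.succ_lt_succ h), qB_gt (Nat.lt_succ_of_lt h), qB_gt h]
    ring
  rcases Nat.eq_or_lt_of_le h with heq | h
  · subst heq
    rw [qB_self, qB_self, qB_gt (Nat.lt_succ_self j), Nat.sub_self, pow_zero]
    ring
  · have hj1m : j + 1 ≤ m := h
    rw [qB, qB, qB, if_pos (by omega), if_pos (by omega), if_pos (by omega)]
    have e1 : m + 1 - (j + 1) = m - j := by omega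
    have e2 : m - (j + 1) = m - j - 1 := by omega
    rw [e1, e2]
    have hFm1 : qFact qv (m + 1) = qFact qv m * qInt qv (m + 1) := qFact_succ m
    have hFj1 : qFact qv (j + 1) = qFact qv j * qInt qv (j + 1) := qFact_succ j
    have hFmj : qFact qv (m - j) = qFact qv (m - j - 1) * qInt qv (m - j) := by
      rw [show m - j = (m - j - 1) + 1 by omega, qFact_succ,
        show m - j - 1 + 1 = m - j by omega]
    have hIm1 : qInt qv (m + 1) = qInt qv (m - j) + qv ^ (m - j) * qInt qv (j + 1) := by
      conv_lhs => rw [show m + 1 = (m - j) + (j + 1) by omega]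
      exact qInt_add _ _
    rw [hFm1, hFj1, hFmj, hIm1]
    have h1 : qFact qv j ≠ 0 := qFact_ne_zero _
    have h2 : qFact qv (m - j - 1) ≠ 0 := qFact_ne_zero _
    have h3 : qInt qv (j + 1) ≠ 0 := qInt_ne_zero (by omega)
    have h4 : qInt qv (m - j) ≠ 0 := qInt_ne_zero (by omega)
    field_simp

/-- The Gauss sum `∑ (-1)^j q^(C(j,2)) t^j [m choose j]_q`. -/
def qGauss (t : Fq) (m : ℕ) : Fq :=
  ∑ j ∈ Finset.range (m + 1), (-1 : Fq) ^ j * qv ^ (j.choose 2) * t ^ j * qB m j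

lemma qGauss_rec (t : Fq) (m : ℕ) :
    qGauss t (m + 1) = (1 - t * qv ^ m) * qGauss t m := by
  rw [qGauss, Finset.sum_range_succ']
  have step : ∀ j ∈ Finset.range (m + 1),
      (-1 : Fq) ^ (j+1) * qv ^ ((j+1).choose 2) * t ^ (j+1) * qB (m+1) (j+1)
      = (-1 : Fq) ^ (j+1) * qv ^ ((j+1).choose 2) * t ^ (j+1) * qB m (j+1)
        + (-(t * qv ^ m)) * ((-1 : Fq) ^ j * qv ^ (j.choose 2) * t ^ j * qB m j) := by
    intro j hj
    rw [Finset.mem_range] at hj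
    rw [qB_pascal]
    have hch : (j + 1).choose 2 = j.choose 2 + j := by
      rw [Nat.choose_succ_succ, Nat.choose_one_right, Nat.add_comm]
    have hpow : qv ^ ((j+1).choose 2) * qv ^ (m - j) = qv ^ (j.choose 2) * qv ^ m := by
      rw [← pow_add, ← pow_add, hch]
      have : j.choose 2 + j + (m - j) = j.choose 2 + m := by omega
      rw [this]
    rw [pow_succ (-1 : Fq), pow_succ t]
    linear_combination (-((-1:Fq)^j * t^j * t * qB m j)) * hpow
  rw [Finset.sum_congr rfl step, Finset.sum_add_distrib, ← Finset.mul_sum]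
  have h0 : (-1:Fq)^0 * qv^(Nat.choose 0 2) * t^0 * qB (m+1) 0
      = (-1:Fq)^0 * qv^(Nat.choose 0 2) * t^0 * qB m 0 := by
    rw [qB_zero, qB_zero]
  rw [h0]
  have hsum : (∑ j ∈ Finset.range (m+1),
        (-1 : Fq) ^ (j+1) * qv ^ ((j+1).choose 2) * t ^ (j+1) * qB m (j+1))
      + (-1:Fq)^0 * qv^(Nat.choose 0 2) * t^0 * qB m 0 = qGauss t m := by
    rw [← Finset.sum_range_succ'
      (fun j => (-1 : Fq) ^ j * qv ^ (j.choose 2) * t ^ j * qB m j) (m+1)]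
    rw [Finset.sum_range_succ, qB_gt (Nat.lt_succ_self m), mul_zero, add_zero]
    rfl
  rw [show (∑ i ∈ Finset.range (m+1), (-1:Fq)^i * qv^(i.choose 2) * t^i * qB m i)
    = qGauss t m from rfl]
  linear_combination hsum

lemma qGauss_inv_eq_zero {m : ℕ} (hm : 2 ≤ m) : qGauss qv⁻¹ m = 0 := by
  induction m with
  | zero => omega
  | succ n ih =>
    rcases Nat.lt_or_ge n 2 with h | h
    · have hn : n = 1 := by omega
      subst hn
      rw [qGauss_rec, pow_one, inv_mul_cancel₀ qv_ne_zero, sub_self, zero_mul]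
    · rw [qGauss_rec, ih h, mul_zero]

lemma qS_eq_zero {m : ℕ} (hm : 2 ≤ m) :
    ∑ j ∈ Finset.range (m + 1),
      (-1 : Fq) ^ j * qv ^ (j.choose 2) * (qv⁻¹) ^ j / (qFact qv j * qFact qv (m - j)) = 0 := by
  have hg := qGauss_inv_eq_zero hm
  rw [qGauss] at hg
  have key : ∀ j ∈ Finset.range (m + 1),
      (-1 : Fq) ^ j * qv ^ (j.choose 2) * (qv⁻¹) ^ j * qB m j
      = qFact qv m * ((-1 : Fq) ^ j * qv ^ (j.choose 2) * (qv⁻¹) ^ j /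
          (qFact qv j * qFact qv (m - j))) := by
    intro j hj
    rw [Finset.mem_range] at hj
    rw [qB, if_pos (by omega : j ≤ m), div_eq_mul_inv, div_eq_mul_inv]
    ring
  rw [Finset.sum_congr rfl key, ← Finset.mul_sum] at hg
  exact (mul_eq_zero.mp hg).resolve_left (qFact_ne_zero m)

lemma term_eq {m k : ℕ} (hme : m % 2 = 0) (hk : k ≤ m) :
    (coeff k) (qsin qv) * (coeff (m - k)) (qsin qv⁻¹)
      + (coeff k) (qcos qv) * (coeff (m - k)) (qcos qv⁻¹)
    = (-1 : Fq) ^ (m / 2) * qv ^ (m / 2) *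
        ((-1 : Fq) ^ (m - k) * qv ^ ((m - k).choose 2) * (qv⁻¹) ^ (m - k) /
          (qFact qv (m - k) * qFact qv k)) := by
  have hA : qFact qv k ≠ 0 := qFact_ne_zero k
  have hB : qFact qv (m - k) ≠ 0 := qFact_ne_zero (m - k)
  simp only [qsin, qcos, coeff_mk]
  rcases Nat.even_or_odd k with hke | hko
  · have h1 : k % 2 = 0 := Nat.even_iff.mp hke
    have h2 : (m - k) % 2 = 0 := by omega
    rw [if_neg (by omega), if_neg (by omega), if_pos h1, if_pos h2]
    obtain ⟨a, ha⟩ : ∃ a, k = 2 * a := ⟨k / 2, by omega⟩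
    obtain ⟨b, hb⟩ : ∃ b, m - k = 2 * b := ⟨(m - k) / 2, by omega⟩
    have hk2 : k / 2 = a := by omega
    have hmk2 : (m - k) / 2 = b := by omega
    have hm2 : m / 2 = a + b := by omega
    rw [hk2, hmk2, hm2, qFact_inv_eq, hb]
    rw [hb] at hB
    have hneg : (-1 : Fq) ^ (2 * b) = 1 := by
      rw [pow_mul]; norm_num
    rw [hneg]
    field_simp
    have hq := qv_ne_zero
    simp only [one_div, inv_pow, ne_eq, OfNat.ofNat_ne_zero, not_false_eq_true, zero_pow,
      mul_zero, zero_mul, zero_add, add_zero]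
    field_simp
    ring
  · have h1 : k % 2 = 1 := Nat.odd_iff.mp hko
    have h2 : (m - k) % 2 = 1 := by omega
    rw [if_pos h1, if_pos h2, if_neg (by omega), if_neg (by omega)]
    obtain ⟨a, ha⟩ : ∃ a, k = 2 * a + 1 := ⟨k / 2, by omega⟩
    obtain ⟨b, hb⟩ : ∃ b, m - k = 2 * b + 1 := ⟨(m - k) / 2, by omega⟩
    have hk2 : k / 2 = a := by omega
    have hmk2 : (m - k) / 2 = b := by omega
    have hm2 : m / 2 = a + b + 1 := by omega
    rw [hk2, hmk2, hm2, qFact_inv_eq, hb]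
    rw [hb] at hB
    have hneg : (-1 : Fq) ^ (2 * b + 1) = -1 := by
      rw [pow_succ, pow_mul]; norm_num
    rw [hneg]
    field_simp
    have hq := qv_ne_zero
    simp only [one_div, inv_pow, ne_eq, OfNat.ofNat_ne_zero, not_false_eq_true, zero_pow,
      mul_zero, zero_mul, zero_add, add_zero]
    field_simp
    ring

theorem q_sine_cosine_pair_0101 :
    qsin qv * qsin qv⁻¹ + qcos qv * qcos qv⁻¹ = 1 := by
  ext n
  rw [map_add, PowerSeries.coeff_mul, PowerSeries.coeff_mul, ← Finset.sum_add_distrib,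
    PowerSeries.coeff_one]
  rcases eq_or_ne n 0 with rfl | hn
  · rw [if_pos rfl]
    simp [Finset.Nat.antidiagonal_zero, qsin, qcos, coeff_mk, qFact]
  rw [if_neg hn]
  rcases Nat.even_or_odd n with hne | hno
  · -- n even, n ≥ 2
    have hpar : n % 2 = 0 := Nat.even_iff.mp hne
    have hn2 : 2 ≤ n := by omega
    rw [Finset.Nat.sum_antidiagonal_eq_sum_range_succ_mk]
    set F : ℕ → Fq := fun j =>
      (-1 : Fq) ^ j * qv ^ (j.choose 2) * (qv⁻¹) ^ j / (qFact qv j * qFact qv (n - j))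
      with hF
    have key : ∀ k ∈ Finset.range (n + 1),
        (coeff (k, n - k).1) (qsin qv) * (coeff (k, n - k).2) (qsin qv⁻¹)
          + (coeff (k, n - k).1) (qcos qv) * (coeff (k, n - k).2) (qcos qv⁻¹)
        = (-1 : Fq) ^ (n / 2) * qv ^ (n / 2) * F (n - k) := by
      intro k hk
      rw [Finset.mem_range] at hk
      have := term_eq hpar (by omega : k ≤ n)
      rw [hF]
      simp only
      rw [show n - (n - k) = k from by omega]
      exact this
    rw [Finset.sum_congr rfl key, ← Finset.mul_sum]
    have hrefl := Finset.sum_range_reflect F (n + 1)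
    simp only [Nat.add_sub_cancel] at hrefl
    rw [hrefl, hF]
    rw [qS_eq_zero hn2, mul_zero]
  · -- n odd: every term vanishes by parity
    have hpar : n % 2 = 1 := Nat.odd_iff.mp hno
    apply Finset.sum_eq_zero
    intro p hp
    rw [Finset.HasAntidiagonal.mem_antidiagonal] at hp
    rcases Nat.even_or_odd p.1 with h | h
    · have h1 : p.1 % 2 = 0 := Nat.even_iff.mp h
      have h2 : p.2 % 2 = 1 := by omega
      simp [qsin, qcos, coeff_mk, h1, h2]
    · have h1 : p.1 % 2 = 1 := Nat.odd_iff.mp h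
      have h2 : p.2 % 2 = 0 := by omega
      simp [qsin, qcos, coeff_mk, h1, h2]
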